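/- Let B be an integral domain and let A = [A^{ij}] ⊆ M_d(B) be a tiled matrix ring. Fix indices i, j, k ∈ {1,…,d} and suppose that A^{ij} ≠ 0, A^{ji} ≠ 0, and A^{ii}·1_d = Z(A). Suppose moreover that there exists a nonzero p ∈ e_jAe_i such that for every Z(A)-module homomorphism f : e_jAe_i → e_kAe_i there is some r ∈ e_kAe_j satisfying f(p) = rp. Then the map e_kAe_j → Hom_{Z(A)}(e_jAe_i, e_kAe_i) sending r to the homomorphism q ↦ rq is an isomorphism of Z(A)-modules. -/

import Mathlib

open Matrix

/-- The corner space `e_a A e_b` of a subring `A` of a matrix ring, where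
`e_a = stdBasisMatrix a a 1` is the idempotent at index `a`. -/
def cornerSet {B : Type*} [CommRing B] {d : ℕ}
    (A : Set (Matrix (Fin d) (Fin d) B)) (a b : Fin d) :
    Set (Matrix (Fin d) (Fin d) B) :=
  {M | ∃ N ∈ A, M = Matrix.single a a 1 * N * Matrix.single b b 1}

/-- `z` is an element of the center `Z(A)`. -/
def IsCenterElt {B : Type*} [CommRing B] {d : ℕ}
    (A : Set (Matrix (Fin d) (Fin d) B)) (z : Matrix (Fin d) (Fin d) B) : Prop :=
  z ∈ A ∧ ∀ a ∈ A, z * a = a * z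

/-- `f` represents a `Z(A)`-module homomorphism `e_j A e_i → e_k A e_i`:
it maps the corner `e_j A e_i` into the corner `e_k A e_i`, is additive, and is
`Z(A)`-linear (the `Z(A)`-action being multiplication in the matrix ring). -/
def IsCornerZHom {B : Type*} [CommRing B] {d : ℕ}
    (A : Set (Matrix (Fin d) (Fin d) B)) (j i k : Fin d)
    (f : Matrix (Fin d) (Fin d) B → Matrix (Fin d) (Fin d) B) : Prop :=
  (∀ M ∈ cornerSet A j i, f M ∈ cornerSet A k i) ∧
  (∀ M ∈ cornerSet A j i, ∀ N ∈ cornerSet A j i, f (M + N) = f M + f N) ∧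
  (∀ z, IsCenterElt A z → ∀ M ∈ cornerSet A j i, f (z * M) = z * f M)

section Aux

variable {B : Type*} [CommRing B] {d : ℕ}

lemma e_mul_mul_e (a b : Fin d) (N : Matrix (Fin d) (Fin d) B) :
    Matrix.single a a 1 * N * Matrix.single b b 1 = Matrix.single a b (N a b) := by
  ext x y
  rcases eq_or_ne a x with rfl | hx
  · rcases eq_or_ne b y with rfl | hy
    · simp
    · simp [hy, hy.symm]
  · rw [mul_assoc, Matrix.single_mul_apply_of_ne (h := hx.symm)]
    simp [hx]

lemma std_mem {T : Fin d → Fin d → AddSubgroup B} {A : Subring (Matrix (Fin d) (Fin d) B)}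
    (hA : ∀ M, M ∈ A ↔ ∀ a b, M a b ∈ T a b) {a b : Fin d} {c : B} (hc : c ∈ T a b) :
    Matrix.single a b c ∈ A := by
  rw [hA]
  intro x y
  by_cases h : a = x ∧ b = y
  · obtain ⟨rfl, rfl⟩ := h; simpa using hc
  · rw [Matrix.single_apply_of_ne (h := h)]; exact zero_mem _

lemma mem_corner {T : Fin d → Fin d → AddSubgroup B} {A : Subring (Matrix (Fin d) (Fin d) B)}
    (hA : ∀ M, M ∈ A ↔ ∀ a b, M a b ∈ T a b) {a b : Fin d} {M : Matrix (Fin d) (Fin d) B} :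
    M ∈ cornerSet (A : Set (Matrix (Fin d) (Fin d) B)) a b ↔
      ∃ c ∈ T a b, M = Matrix.single a b c := by
  constructor
  · rintro ⟨N, hN, rfl⟩
    exact ⟨N a b, (hA N).1 hN a b, e_mul_mul_e a b N⟩
  · rintro ⟨c, hc, rfl⟩
    refine ⟨Matrix.single a b c, std_mem hA hc, ?_⟩
    rw [e_mul_mul_e]
    simp

lemma tile_mul {T : Fin d → Fin d → AddSubgroup B} {A : Subring (Matrix (Fin d) (Fin d) B)}
    (hA : ∀ M, M ∈ A ↔ ∀ a b, M a b ∈ T a b) {a b c : Fin d} {x y : B}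
    (hx : x ∈ T a b) (hy : y ∈ T b c) : x * y ∈ T a c := by
  have := mul_mem (std_mem hA hx) (std_mem hA hy)
  rw [Matrix.single_mul_single_same] at this
  simpa using (hA _).1 this a c

lemma exists_ne_zero {H : AddSubgroup B} (h : H ≠ ⊥) : ∃ x ∈ H, x ≠ 0 := by
  by_contra hc
  push_neg at hc
  exact h (AddSubgroup.eq_bot_iff_forall H |>.2 hc)

end Aux

/-- Let `B` be an integral domain and `A = [A^{ij}] ⊆ M_d(B)` a tiled matrix
ring.  Suppose `A^{ij} ≠ 0`, `A^{ji} ≠ 0`, `A^{ii}·1_d = Z(A)`, and that there is a nonzero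
`p ∈ e_j A e_i` such that every `Z(A)`-module homomorphism `f : e_j A e_i → e_k A e_i`
satisfies `f(p) = r p` for some `r ∈ e_k A e_j`.  Then the map
`e_k A e_j → Hom_{Z(A)}(e_j A e_i, e_k A e_i)`, `r ↦ (q ↦ r q)`, is an isomorphism of
`Z(A)`-modules: it is well defined (left multiplication by each `r ∈ e_k A e_j` is a
`Z(A)`-module homomorphism of the corners), injective, and surjective. -/
theorem corner_hom_left_mult_iso {B : Type*} [CommRing B] [IsDomain B] {d : ℕ}
    (T : Fin d → Fin d → AddSubgroup B)
    (A : Subring (Matrix (Fin d) (Fin d) B))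
    (hA : ∀ M, M ∈ A ↔ ∀ a b, M a b ∈ T a b)
    (i j k : Fin d)
    (hij : T i j ≠ ⊥) (hji : T j i ≠ ⊥)
    (hZ : ∀ z, IsCenterElt (A : Set (Matrix (Fin d) (Fin d) B)) z ↔
      ∃ s ∈ T i i, z = s • (1 : Matrix (Fin d) (Fin d) B))
    (hp : ∃ p ∈ cornerSet (A : Set (Matrix (Fin d) (Fin d) B)) j i, p ≠ 0 ∧
      ∀ f, IsCornerZHom (A : Set (Matrix (Fin d) (Fin d) B)) j i k f →
        ∃ r ∈ cornerSet (A : Set (Matrix (Fin d) (Fin d) B)) k j, f p = r * p) :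
    (∀ r ∈ cornerSet (A : Set (Matrix (Fin d) (Fin d) B)) k j,
      IsCornerZHom (A : Set (Matrix (Fin d) (Fin d) B)) j i k (fun q => r * q)) ∧
    (∀ r ∈ cornerSet (A : Set (Matrix (Fin d) (Fin d) B)) k j,
      ∀ r' ∈ cornerSet (A : Set (Matrix (Fin d) (Fin d) B)) k j,
        (∀ q ∈ cornerSet (A : Set (Matrix (Fin d) (Fin d) B)) j i, r * q = r' * q) →
          r = r') ∧
    (∀ f, IsCornerZHom (A : Set (Matrix (Fin d) (Fin d) B)) j i k f →
      ∃ r ∈ cornerSet (A : Set (Matrix (Fin d) (Fin d) B)) k j,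
        ∀ q ∈ cornerSet (A : Set (Matrix (Fin d) (Fin d) B)) j i, f q = r * q) := by
  have hmul : ∀ r ∈ cornerSet (A : Set (Matrix (Fin d) (Fin d) B)) k j,
      ∀ q ∈ cornerSet (A : Set (Matrix (Fin d) (Fin d) B)) j i,
      r * q ∈ cornerSet (A : Set (Matrix (Fin d) (Fin d) B)) k i := by
    intro r hr q hq
    obtain ⟨c, hc, rfl⟩ := (mem_corner hA).1 hr
    obtain ⟨e, he, rfl⟩ := (mem_corner hA).1 hq
    rw [Matrix.single_mul_single_same]
    exact (mem_corner hA).2 ⟨c * e, tile_mul hA hc he, rfl⟩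
  refine ⟨?_, ?_, ?_⟩
  · -- well-definedness
    intro r hr
    refine ⟨fun M hM => hmul r hr M hM, fun M _ N _ => mul_add r M N, ?_⟩
    intro z hz M _
    obtain ⟨s, _, rfl⟩ := (hZ z).1 hz
    simp only [smul_mul_assoc, one_mul]
    exact mul_smul_comm s r M
  · -- injectivity
    intro r hr r' hr' h
    obtain ⟨c, hc, rfl⟩ := (mem_corner hA).1 hr
    obtain ⟨c', hc', rfl⟩ := (mem_corner hA).1 hr'
    obtain ⟨x, hx, hx0⟩ := exists_ne_zero hji
    have := h (Matrix.single j i x) ((mem_corner hA).2 ⟨x, hx, rfl⟩)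
    rw [Matrix.single_mul_single_same, Matrix.single_mul_single_same] at this
    have hcc : c * x = c' * x := by
      have := congrFun (congrFun this k) i
      simpa using this
    have : c = c' := mul_right_cancel₀ hx0 hcc
    rw [this]
  · -- surjectivity
    intro f hf
    obtain ⟨p, hpc, hp0, hpr⟩ := hp
    obtain ⟨r, hr, hfp⟩ := hpr f hf
    obtain ⟨pb, hpb, rfl⟩ := (mem_corner hA).1 hpc
    have hpb0 : pb ≠ 0 := by rintro rfl; simp at hp0
    obtain ⟨u, hu, hu0⟩ := exists_ne_zero hij
    refine ⟨r, hr, ?_⟩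
    intro q hq
    obtain ⟨qb, hqb, rfl⟩ := (mem_corner hA).1 hq
    -- central elements
    have hupb : u * pb ∈ T i i := tile_mul hA hu hpb
    have huqb : u * qb ∈ T i i := tile_mul hA hu hqb
    have hz1 : IsCenterElt (A : Set (Matrix (Fin d) (Fin d) B))
        ((u * pb) • (1 : Matrix (Fin d) (Fin d) B)) := (hZ _).2 ⟨u * pb, hupb, rfl⟩
    have hz2 : IsCenterElt (A : Set (Matrix (Fin d) (Fin d) B))
        ((u * qb) • (1 : Matrix (Fin d) (Fin d) B)) := (hZ _).2 ⟨u * qb, huqb, rfl⟩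
    have key : ((u * pb) • (1 : Matrix (Fin d) (Fin d) B)) * Matrix.single j i qb
        = ((u * qb) • (1 : Matrix (Fin d) (Fin d) B)) * Matrix.single j i pb := by
      rw [smul_mul_assoc, one_mul, smul_mul_assoc, one_mul, Matrix.smul_single,
        Matrix.smul_single]
      have : (u * pb) • qb = (u * qb) • pb := by simp only [smul_eq_mul]; ring
      rw [this]
    have h1 := hf.2.2 _ hz1 _ ((mem_corner hA).2 ⟨qb, hqb, rfl⟩)
    have h2 := hf.2.2 _ hz2 _ ((mem_corner hA).2 ⟨pb, hpb, rfl⟩)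
    rw [key] at h1
    rw [h2, hfp] at h1
    -- h1 : (u*qb) • 1 * (r * p) = (u*pb) • 1 * f q
    have h3 : (u * pb) • (r * Matrix.single j i qb)
        = (u * pb) • f (Matrix.single j i qb) := by
      have : ((u * qb) • (1 : Matrix (Fin d) (Fin d) B)) * (r * Matrix.single j i pb)
          = (u * pb) • (r * Matrix.single j i qb) := by
        obtain ⟨c, hc, rfl⟩ := (mem_corner hA).1 hr
        rw [Matrix.single_mul_single_same, Matrix.single_mul_single_same, smul_mul_assoc, one_mul,
          Matrix.smul_single, Matrix.smul_single]
        have : (u * qb) • (c * pb) = (u * pb) • (c * qb) := by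
          simp only [smul_eq_mul]; ring
        rw [this]
      rw [this] at h1
      rw [h1, smul_mul_assoc, one_mul]
    have hupb0 : u * pb ≠ 0 := mul_ne_zero hu0 hpb0
    ext x y
    have := congrFun (congrFun h3 x) y
    simp only [Matrix.smul_apply, smul_eq_mul] at this
    exact (mul_left_cancel₀ hupb0 this).symm
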